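/- Let μ be a probability measure on {0,1}^V that is k-Markov and satisfies μ([1^{v}]) ≥ α > 0 for every vertex v, on a graph of degree bounded by Δ. Then there exists β with 0 < β < 1 such that for every finite set D ⊆ V of cardinality n, μ([0^D]) ≤ β^n. -/

import Mathlib

open MeasureTheory


open MeasureTheory Finset

/-- Ball of radius `r` around `v` as a finset. -/
def ballF {V : Type*} [DecidableEq V] (G : SimpleGraph V) [G.LocallyFinite] (v : V) : ℕ → Finset V
  | 0 => {v}
  | r + 1 => (ballF G v r) ∪ (ballF G v r).biUnion (fun u => G.neighborFinset u)

section aux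
variable {V : Type*} [DecidableEq V] (G : SimpleGraph V) [G.LocallyFinite]

lemma self_mem_ballF (v : V) (r : ℕ) : v ∈ ballF G v r := by
  induction r with
  | zero => simp [ballF]
  | succ r ih => simp only [ballF, Finset.mem_union]; left; exact ih

lemma mem_ballF_of_walk {v : V} : ∀ {r : ℕ} {w : V} (p : G.Walk w v), p.length ≤ r → w ∈ ballF G v r := by
  intro r
  induction r with
  | zero =>
    intro w p hp
    cases p with
    | nil => simp [ballF]
    | cons h q => simp at hp
  | succ r ih =>
    intro w p hp
    cases p with
    | nil => exact self_mem_ballF G v (r+1)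
    | cons h q =>
      rename_i u
      have hu : u ∈ ballF G v r := ih q (by simpa using Nat.succ_le_succ_iff.1 hp)
      simp only [ballF, Finset.mem_union, Finset.mem_biUnion]
      right
      exact ⟨u, hu, by simpa [SimpleGraph.mem_neighborFinset] using h.symm⟩

lemma card_ballF {Δ : ℕ} (hdeg : ∀ v : V, G.degree v ≤ Δ) (v : V) (r : ℕ) :
    (ballF G v r).card ≤ (Δ + 1) ^ r := by
  induction r with
  | zero => simp [ballF]
  | succ r ih =>
    calc (ballF G v (r+1)).card
        ≤ (ballF G v r).card + ((ballF G v r).biUnion (fun u => G.neighborFinset u)).card := by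
          simpa [ballF] using Finset.card_union_le _ _
      _ ≤ (ballF G v r).card + (ballF G v r).card * Δ := by
          gcongr
          refine le_trans (Finset.card_biUnion_le) ?_
          refine le_trans (Finset.sum_le_card_nsmul _ _ Δ fun u _ => ?_) (by simp [mul_comm])
          simpa [SimpleGraph.card_neighborFinset_eq_degree] using hdeg u
      _ = (ballF G v r).card * (Δ + 1) := by ring
      _ ≤ (Δ + 1) ^ r * (Δ + 1) := by gcongr
      _ = (Δ + 1) ^ (r + 1) := by ring

lemma far_of_not_mem_ballF {k : ℕ} {v w : V} (h : w ∉ ballF G v (k - 1)) :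
    G.Reachable v w → k ≤ G.dist v w := by
  intro hr
  cases k with
  | zero => exact Nat.zero_le _
  | succ k =>
    by_contra h'
    push_neg at h'
    obtain ⟨p, hp⟩ := hr.exists_walk_length_eq_dist
    exact h (mem_ballF_of_walk G p.reverse (by simp [hp]; omega))

/-- Greedy selection of a `k`-separated subset of proportional size. -/
lemma greedy {k C : ℕ} (hC : ∀ v : V, (ballF G v (k - 1)).card ≤ C) (D : Finset V) :
    ∃ S : Finset V, S ⊆ D ∧
      (∀ u ∈ S, ∀ w ∈ S, u ≠ w → G.Reachable u w → k ≤ G.dist u w) ∧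
      D.card ≤ S.card * C := by
  induction D using Finset.strongInduction with
  | _ D ih =>
    rcases D.eq_empty_or_nonempty with rfl | ⟨v, hv⟩
    · exact ⟨∅, by simp⟩
    · set D' := D \ ballF G v (k - 1) with hD'
      have hss : D' ⊂ D := by
        refine Finset.ssubset_iff_of_subset (Finset.sdiff_subset) |>.2 ⟨v, hv, ?_⟩
        simp [hD', self_mem_ballF]
      obtain ⟨S', hS'sub, hS'sep, hS'card⟩ := ih D' hss
      have hvS' : v ∉ S' := fun h => by
        have := hS'sub h
        simp [hD', self_mem_ballF] at this
      refine ⟨insert v S', ?_, ?_, ?_⟩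
      · intro x hx
        rcases Finset.mem_insert.1 hx with rfl | hx
        · exact hv
        · exact Finset.sdiff_subset (hS'sub hx)
      · intro u hu w hw hne
        rcases Finset.mem_insert.1 hu with hu0 | hu
        · rcases Finset.mem_insert.1 hw with hw0 | hw
          · exact absurd (hu0.trans hw0.symm) hne
          · rw [hu0]
            have hwb : w ∉ ballF G v (k - 1) := by
              have := hS'sub hw; simp [hD'] at this; exact this.2
            exact far_of_not_mem_ballF G hwb
        · rcases Finset.mem_insert.1 hw with hw0 | hw
          · rw [hw0]
            have hub : u ∉ ballF G v (k - 1) := by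
              have := hS'sub hu; simp [hD'] at this; exact this.2
            intro hru
            rw [SimpleGraph.dist_comm]
            exact far_of_not_mem_ballF G hub hru.symm
          · exact hS'sep u hu w hw hne
      · have h1 : D.card ≤ D'.card + C := by
          have h0 : D.card = (D ∩ ballF G v (k - 1)).card + D'.card :=
            (Finset.card_inter_add_card_sdiff D _).symm
          have h2 : (D ∩ ballF G v (k - 1)).card ≤ C :=
            le_trans (Finset.card_le_card (Finset.inter_subset_right)) (hC v)
          omega
        have h3 : (insert v S').card = S'.card + 1 := Finset.card_insert_of_notMem hvS'
        calc D.card ≤ D'.card + C := h1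
          _ ≤ S'.card * C + C := by omega
          _ = (S'.card + 1) * C := by ring
          _ = (insert v S').card * C := by rw [h3]

end aux

section measure
variable {V : Type*} [DecidableEq V] {G : SimpleGraph V} {k : ℕ}
variable {μ : Measure (V → Bool)} [IsProbabilityMeasure μ]

lemma single_bound {α : ENNReal} (hα : ∀ v : V, α ≤ μ {x | x v = true}) (v : V) :
    μ {x | x v = false} ≤ 1 - α := by
  have hmeas : MeasurableSet {x : V → Bool | x v = true} := by
    have : {x : V → Bool | x v = true} = (fun x : V → Bool => x v) ⁻¹' {true} := by
      ext x; simp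
    rw [this]
    exact (measurable_pi_apply v) (measurableSet_singleton true)
  have hcompl : {x : V → Bool | x v = false} = {x : V → Bool | x v = true}ᶜ := by
    ext x; simp
  rw [hcompl, measure_compl hmeas (measure_ne_top μ _), measure_univ]
  exact tsub_le_tsub_left (hα v) 1

lemma indep_bound
    (hMarkov : ∀ (D : Finset V) (X : Set V),
      (∀ u ∈ D, ∀ w ∈ X, G.Reachable u w → k ≤ G.dist u w) →
      ∀ u P : V → Bool,
        μ ({x | ∀ w ∈ D, x w = u w} ∩ {x | ∀ w ∈ X, x w = P w}) =
          μ {x | ∀ w ∈ D, x w = u w} * μ {x | ∀ w ∈ X, x w = P w})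
    {α : ENNReal} (hα : ∀ v : V, α ≤ μ {x | x v = true}) :
    ∀ S : Finset V, (∀ u ∈ S, ∀ w ∈ S, u ≠ w → G.Reachable u w → k ≤ G.dist u w) →
      μ {x | ∀ w ∈ S, x w = false} ≤ (1 - α) ^ S.card := by
  intro S
  induction S using Finset.induction_on with
  | empty =>
    intro _
    simp only [Finset.notMem_empty, false_implies, implies_true, Set.setOf_true,
      Finset.card_empty, pow_zero, measure_univ, le_refl]
  | insert _ _ hv =>
    rename_i v S' ih
    intro hsep
    have hcond : ∀ u ∈ ({v} : Finset V), ∀ w ∈ (↑S' : Set V), G.Reachable u w → k ≤ G.dist u w := by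
      intro u hu w hw
      simp only [Finset.mem_singleton] at hu
      subst hu
      exact hsep u (Finset.mem_insert_self _ _) w (Finset.mem_insert_of_mem hw)
        (fun h => hv (h ▸ hw))
    have key := hMarkov {v} (↑S') hcond (fun _ => false) (fun _ => false)
    have hset : {x : V → Bool | ∀ w ∈ insert v S', x w = false} =
        {x : V → Bool | ∀ w ∈ ({v} : Finset V), x w = (fun _ => false) w} ∩
        {x : V → Bool | ∀ w ∈ (↑S' : Set V), x w = (fun _ => false) w} := by
      ext x
      simp [Finset.mem_insert, or_imp, forall_and]
    rw [hset, key]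
    have h1 : μ {x : V → Bool | ∀ w ∈ ({v} : Finset V), x w = (fun _ => false) w} ≤ 1 - α := by
      have : {x : V → Bool | ∀ w ∈ ({v} : Finset V), x w = (fun _ => false) w} =
          {x : V → Bool | x v = false} := by
        ext x; simp
      rw [this]; exact single_bound hα v
    have h2 : μ {x : V → Bool | ∀ w ∈ (↑S' : Set V), x w = (fun _ => false) w} ≤ (1 - α) ^ S'.card := by
      have : {x : V → Bool | ∀ w ∈ (↑S' : Set V), x w = (fun _ => false) w} =
          {x : V → Bool | ∀ w ∈ S', x w = false} := by
        ext x; simp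
      rw [this]
      exact ih (fun u hu w hw hne => hsep u (Finset.mem_insert_of_mem hu) w
        (Finset.mem_insert_of_mem hw) hne)
    calc μ {x : V → Bool | ∀ w ∈ ({v} : Finset V), x w = (fun _ => false) w} *
          μ {x : V → Bool | ∀ w ∈ (↑S' : Set V), x w = (fun _ => false) w}
        ≤ (1 - α) * (1 - α) ^ S'.card := mul_le_mul' h1 h2
      _ = (1 - α) ^ (insert v S').card := by
          rw [Finset.card_insert_of_notMem hv, pow_succ]; ring

end measure

/-- If `μ` is a `k`-Markov probability measure on `{0,1}^V` (patterns on
sets at graph distance at least `k` are independent), the graph has maximum degree `Δ`, and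
`μ([1^{v}]) ≥ α > 0` for every vertex `v`, then there is `β` with `0 < β < 1` such that
`μ([0^D]) ≤ β^|D|` for every finite `D ⊆ V`. -/
theorem stmt_2 {V : Type*} (G : SimpleGraph V) [G.LocallyFinite]
    (Δ k : ℕ) (hdeg : ∀ v : V, G.degree v ≤ Δ)
    (μ : Measure (V → Bool)) [IsProbabilityMeasure μ]
    (hMarkov : ∀ (D : Finset V) (X : Set V),
      (∀ u ∈ D, ∀ w ∈ X, G.Reachable u w → k ≤ G.dist u w) →
      ∀ u P : V → Bool,
        μ ({x | ∀ w ∈ D, x w = u w} ∩ {x | ∀ w ∈ X, x w = P w}) =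
          μ {x | ∀ w ∈ D, x w = u w} * μ {x | ∀ w ∈ X, x w = P w})
    (α : ENNReal) (hα0 : 0 < α) (hα : ∀ v : V, α ≤ μ {x | x v = true}) :
    ∃ β : ENNReal, 0 < β ∧ β < 1 ∧
      ∀ D : Finset V, μ {x | ∀ v ∈ D, x v = false} ≤ β ^ D.card := by
  classical
  set C : ℕ := (Δ + 1) ^ (k - 1) with hCdef
  have hCpos : 0 < C := Nat.pow_pos (Nat.succ_pos Δ)
  set γ : ENNReal := (1 - α) ⊔ 2⁻¹ with hγdef
  have hγ1 : γ < 1 := by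
    refine max_lt ?_ (by norm_num)
    exact ENNReal.sub_lt_self ENNReal.one_ne_top one_ne_zero hα0.ne'
  have hγ0 : 0 < γ := lt_of_lt_of_le (by norm_num) (le_max_right _ _)
  have hγtop : γ ≠ ⊤ := hγ1.le.trans_lt (by norm_num) |>.ne
  refine ⟨γ ^ ((C : ℝ)⁻¹), ENNReal.rpow_pos hγ0 hγtop,
    ENNReal.rpow_lt_one hγ1 (by positivity), ?_⟩
  intro D
  obtain ⟨S, hSD, hSsep, hScard⟩ := greedy G (k := k) (C := C)
    (fun v => card_ballF G hdeg v (k - 1)) D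
  have hmono : μ {x : V → Bool | ∀ v ∈ D, x v = false} ≤
      μ {x : V → Bool | ∀ v ∈ S, x v = false} :=
    measure_mono (fun x hx w hw => hx w (hSD hw))
  have hS : μ {x : V → Bool | ∀ v ∈ S, x v = false} ≤ (1 - α) ^ S.card :=
    indep_bound hMarkov hα S hSsep
  have hγpow : (1 - α) ^ S.card ≤ γ ^ S.card :=
    pow_le_pow_left' (le_max_left _ _) _
  refine le_trans (le_trans hmono (le_trans hS hγpow)) ?_
  -- γ ^ S.card ≤ (γ ^ (C⁻¹)) ^ D.card
  have hrw : (γ ^ ((C : ℝ)⁻¹)) ^ D.card = γ ^ ((C : ℝ)⁻¹ * D.card) := by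
    rw [← ENNReal.rpow_natCast (γ ^ ((C : ℝ)⁻¹)) D.card, ← ENNReal.rpow_mul]
  have hrw2 : γ ^ S.card = γ ^ ((S.card : ℝ)) := (ENNReal.rpow_natCast γ S.card).symm
  rw [hrw, hrw2]
  refine ENNReal.rpow_le_rpow_of_exponent_ge hγ1.le ?_
  have hcast : (D.card : ℝ) ≤ (S.card : ℝ) * C := by exact_mod_cast hScard
  have hCR : (0:ℝ) < C := by exact_mod_cast hCpos
  rw [inv_mul_eq_div, div_le_iff₀ hCR]
  exact hcast
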